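/- Let X be a normed space and C ⊂ X a convex cone with a bounded base B. Then there exists ε' > 0 such that for every 0 < ε < ε', the Henig dilated cone C_{(B,ε)} := cone({y ∈ X : d(y, B) ≤ ε}) admits a bounded base. -/

import Mathlib

/-- The conic hull of a set. -/
def coneHull {E : Type*} [AddCommMonoid E] [Module ℝ E] (A : Set E) : Set E :=
  {x | ∃ l : ℝ, ∃ a ∈ A, 0 ≤ l ∧ x = l • a}

/-- `B` is a base of the cone `C`: a nonempty convex set with `0 ∉ cl(B)` such that every
nonzero `y ∈ C` has a unique representation `y = λ • b` with `λ > 0`, `b ∈ B`. -/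
def IsBase {X : Type*} [NormedAddCommGroup X] [NormedSpace ℝ X]
    (C B : Set X) : Prop :=
  B.Nonempty ∧ Convex ℝ B ∧ (0 : X) ∉ closure B ∧
    ∀ y ∈ C, y ≠ 0 → ∃! p : ℝ × X, (0 < p.1 ∧ p.2 ∈ B) ∧ y = p.1 • p.2

/-- The Henig dilating cone `C_{(B,ε)} := cone({y : d(y,B) ≤ ε})`. -/
def henigCone {X : Type*} [NormedAddCommGroup X] [NormedSpace ℝ X]
    (B : Set X) (ε : ℝ) : Set X :=
  coneHull {y : X | Metric.infDist y B ≤ ε}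

lemma setA_eq_cthickening {X : Type*} [NormedAddCommGroup X] {B : Set X}
    (hBne : B.Nonempty) {ε : ℝ} (hε : 0 ≤ ε) :
    {y : X | Metric.infDist y B ≤ ε} = Metric.cthickening ε B := by
  ext y
  rw [Set.mem_setOf_eq, Metric.mem_cthickening_iff]
  exact (ENNReal.le_ofReal_iff_toReal_le (Metric.infEdist_ne_top hBne) hε).symm

lemma smul_mem_coneHull {E : Type*} [AddCommMonoid E] [Module ℝ E] {A : Set E}
    {r : ℝ} (hr : 0 ≤ r) {x : E} (hx : x ∈ coneHull A) : r • x ∈ coneHull A := by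
  obtain ⟨l, a, ha, hl, rfl⟩ := hx
  exact ⟨r * l, a, ha, mul_nonneg hr hl, by rw [smul_smul]⟩

lemma coneHull_convex {E : Type*} [AddCommGroup E] [Module ℝ E] {A : Set E}
    (hA : Convex ℝ A) : Convex ℝ (coneHull A) := by
  rintro x ⟨l1, a1, ha1, hl1, rfl⟩ y ⟨l2, a2, ha2, hl2, rfl⟩ s t hs ht hst
  set L := s * l1 + t * l2 with hL
  have hL0 : 0 ≤ L := add_nonneg (mul_nonneg hs hl1) (mul_nonneg ht hl2)
  rcases eq_or_lt_of_le hL0 with hL0' | hL0'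
  · have h1 : s * l1 = 0 ∧ t * l2 = 0 := by
      constructor <;> nlinarith [mul_nonneg hs hl1, mul_nonneg ht hl2]
    refine ⟨0, a1, ha1, le_refl 0, ?_⟩
    rw [smul_smul, smul_smul, h1.1, h1.2]; simp
  · refine ⟨L, (s * l1 / L) • a1 + (t * l2 / L) • a2, ?_, hL0, ?_⟩
    · exact hA ha1 ha2 (div_nonneg (mul_nonneg hs hl1) hL0)
        (div_nonneg (mul_nonneg ht hl2) hL0)
        (by field_simp; exact hL.symm)
    · rw [smul_add, smul_smul, smul_smul, smul_smul, smul_smul]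
      rw [mul_div_cancel₀ _ (ne_of_gt hL0'), mul_div_cancel₀ _ (ne_of_gt hL0')]

/-- if a convex cone `C` has a bounded base `B`, then there is `ε' > 0`
such that for every `0 < ε < ε'` the Henig dilated cone `C_{(B,ε)}` admits a bounded
base. -/
theorem henigCone_has_bounded_base {X : Type*} [NormedAddCommGroup X] [NormedSpace ℝ X]
    (C B : Set X) (hCcone : ∀ r : ℝ, 0 ≤ r → ∀ x ∈ C, r • x ∈ C) (hCconv : Convex ℝ C)
    (hB : IsBase C B) (hBbdd : Bornology.IsBounded B) :
    ∃ ε' > (0 : ℝ), ∀ ε : ℝ, 0 < ε → ε < ε' →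
      ∃ B' : Set X, IsBase (henigCone B ε) B' ∧ Bornology.IsBounded B' := by
  obtain ⟨hBne, hBconv, hB0, _⟩ := hB
  have hδ : 0 < Metric.infDist 0 B := by
    rcases (Metric.infDist_nonneg (x := (0 : X)) (s := B)).lt_or_eq with h | h
    · exact h
    · exact absurd ((Metric.mem_closure_iff_infDist_zero hBne).2 h.symm) hB0
  refine ⟨Metric.infDist 0 B, hδ, fun ε hε hεδ => ?_⟩
  set A : Set X := {y : X | Metric.infDist y B ≤ ε} with hAdef
  have hAeq : A = Metric.cthickening ε B := setA_eq_cthickening hBne hε.le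
  have hAconv : Convex ℝ A := hAeq ▸ hBconv.cthickening ε
  have hAclosed : IsClosed A := hAeq ▸ Metric.isClosed_cthickening
  have hAbdd : Bornology.IsBounded A := hAeq ▸ hBbdd.cthickening
  have h0A : (0 : X) ∉ A := fun h => absurd h (not_le.2 hεδ)
  -- separate 0 from A
  obtain ⟨f, u, hu0, hfA⟩ := geometric_hahn_banach_point_closed hAconv hAclosed h0A
  rw [map_zero] at hu0
  -- f is positive on nonzero elements of the Henig cone
  have hfpos : ∀ x ∈ henigCone B ε, x ≠ 0 → 0 < f x := by
    rintro x ⟨l, a, ha, hl, rfl⟩ hx0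
    have hl0 : 0 < l := by
      rcases hl.lt_or_eq with h | h
      · exact h
      · exact absurd (by rw [← h, zero_smul]) hx0
    rw [map_smul]
    exact mul_pos hl0 (hu0.trans (hfA a ha))
  set B' : Set X := {x ∈ henigCone B ε | f x = 1} with hB'def
  have hconeconv : Convex ℝ (henigCone B ε) := coneHull_convex hAconv
  refine ⟨B', ⟨?_, ?_, ?_, ?_⟩, ?_⟩
  · -- nonempty
    obtain ⟨b, hb⟩ := hBne
    have hbA : b ∈ A := by
      simp only [hAdef, Set.mem_setOf_eq, Metric.infDist_zero_of_mem hb]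
      exact hε.le
    have hfb : 0 < f b := hu0.trans (hfA b hbA)
    refine ⟨(f b)⁻¹ • b, ⟨⟨(f b)⁻¹, b, hbA, inv_nonneg.2 hfb.le, rfl⟩, ?_⟩⟩
    rw [map_smul, smul_eq_mul, inv_mul_cancel₀ hfb.ne']
  · -- convex
    rintro x ⟨hx, hfx⟩ y ⟨hy, hfy⟩ s t hs ht hst
    refine ⟨hconeconv hx hy hs ht hst, ?_⟩
    simp [map_add, map_smul, hfx, hfy, smul_eq_mul, hst]
  · -- 0 ∉ closure B'
    intro h0
    have hsub : closure B' ⊆ {x : X | f x = 1} := by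
      apply closure_minimal _ (isClosed_eq f.continuous continuous_const)
      rintro x ⟨_, hfx⟩
      exact hfx
    have := hsub h0
    simp at this
  · -- unique representation
    intro y hy hy0
    have hfy : 0 < f y := hfpos y hy hy0
    refine ⟨(f y, (f y)⁻¹ • y), ⟨⟨hfy, ⟨smul_mem_coneHull (inv_nonneg.2 hfy.le) hy, ?_⟩⟩, ?_⟩, ?_⟩
    · rw [map_smul, smul_eq_mul, inv_mul_cancel₀ hfy.ne']
    · rw [smul_smul, mul_inv_cancel₀ hfy.ne', one_smul]
    · rintro ⟨lam, b⟩ ⟨⟨hlam, hbcone, hfb⟩, hyb⟩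
      have hlameq : lam = f y := by
        rw [hyb, map_smul, smul_eq_mul, hfb, mul_one]
      have hbeq : b = (f y)⁻¹ • y := by
        have hb' : b = lam⁻¹ • y := by
          rw [hyb, smul_smul, inv_mul_cancel₀ (ne_of_gt hlam), one_smul]
        rw [hb', hlameq]
      exact Prod.ext hlameq hbeq
  · -- bounded
    obtain ⟨M, hM⟩ := hAbdd.subset_closedBall 0
    have hu0' : (0:ℝ) < u := hu0
    apply Bornology.IsBounded.subset (Metric.isBounded_closedBall (x := (0:X)) (r := M / u))
    rintro x ⟨⟨l, a, ha, hl, rfl⟩, hfx⟩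
    have hfa : u < f a := hfA a ha
    have hfa0 : 0 < f a := hu0.trans hfa
    have hleq : l = (f a)⁻¹ := by
      rw [map_smul, smul_eq_mul] at hfx
      field_simp at hfx ⊢
      linarith
    have hna : ‖a‖ ≤ M := by
      have := hM ha
      simpa using this
    have hM0 : 0 ≤ M := le_trans (norm_nonneg a) hna
    simp only [Metric.mem_closedBall, dist_zero_right, norm_smul, Real.norm_eq_abs,
      abs_of_nonneg hl]
    calc l * ‖a‖ ≤ (f a)⁻¹ * M := by
          rw [hleq]; exact mul_le_mul_of_nonneg_left hna (inv_nonneg.2 hfa0.le)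
      _ ≤ u⁻¹ * M := by
          apply mul_le_mul_of_nonneg_right _ hM0
          exact inv_anti₀ hu0' hfa.le
      _ = M / u := by rw [inv_mul_eq_div]
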